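/- Let φ_m be a curve of multiplicity m with angle function θ of order ord θ (the least i with θ_i ≠ 0) and parallel curve φ_m^δ = φ_m + δn with δ ≠ 0. Then the multiplicity m^δ of φ_m^δ at t = 0 equals: ord θ if ord θ < m; m if ord θ > m, or if ord θ = m and δ ≠ 1/θ_m; and min{i > m : θ_i ≠ 0} if ord θ = m and δ = 1/θ_m. -/

import Mathlib

open Real MeasureTheory intervalIntegral

/-- A map germ `φ : (ℝ,0) → ℝ²` has multiplicity `m` at `t = 0` if
`φ t − φ 0 = (t^m/m!) • ψ t` for a smooth `ψ` with `ψ 0 ≠ 0`. -/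
def HasMultiplicity (φ : ℝ → ℝ × ℝ) (m : ℕ) : Prop :=
  ∃ ψ : ℝ → ℝ × ℝ, ContDiff ℝ (⊤ : ℕ∞) ψ ∧ ψ 0 ≠ 0 ∧
    ∀ t : ℝ, φ t - φ 0 = (t ^ m / (m.factorial : ℝ)) • ψ t

section Aux

open Set

variable {E : Type*} [NormedAddCommGroup E] [NormedSpace ℝ E] [CompleteSpace E]

lemma paramHasDerivAt (H : ℝ → ℝ → E) (hH : ContDiff ℝ (⊤:ℕ∞) (Function.uncurry H)) (t₀ : ℝ) :
    HasDerivAt (fun t => ∫ s in (0:ℝ)..1, H t s)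
      (∫ s in (0:ℝ)..1, fderiv ℝ (Function.uncurry H) (t₀, s) (1, 0)) t₀ := by
  set F := Function.uncurry H with hF
  have hFd : Differentiable ℝ F := hH.differentiable (by simp)
  set H' : ℝ → ℝ → E := fun t s => fderiv ℝ F (t, s) (1, 0) with hH'
  have hH'c : Continuous (Function.uncurry H') := by
    have : ContDiff ℝ (⊤:ℕ∞) (fun p : ℝ × ℝ => fderiv ℝ F p (1, 0)) :=
      (hH.fderiv_right (by exact_mod_cast le_top)).clm_apply contDiff_const
    exact this.continuous
  have hslice : ∀ (x s : ℝ), HasDerivAt (fun τ => H τ s) (H' x s) x := by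
    intro x s
    have h1 : HasDerivAt (fun τ : ℝ => (τ, s)) ((1:ℝ), (0:ℝ)) x :=
      (hasDerivAt_id x).prodMk (hasDerivAt_const x s)
    exact ((hFd (x, s)).hasFDerivAt.comp_hasDerivAt x h1)
  -- bound on compact set
  obtain ⟨C, hC⟩ := (isCompact_Icc (a := t₀ - 1) (b := t₀ + 1)).prod
    (isCompact_Icc (a := (0:ℝ)) (b := 1)) |>.exists_bound_of_continuousOn
    hH'c.continuousOn
  have main := intervalIntegral.hasDerivAt_integral_of_dominated_loc_of_deriv_le
    (F := H) (F' := H') (x₀ := t₀) (bound := fun _ => C) (a := 0) (b := 1)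
    (μ := volume) (s := Metric.ball t₀ 1) (Metric.ball_mem_nhds t₀ one_pos)
    (Filter.Eventually.of_forall fun x =>
      ((hH.continuous.comp (Continuous.prodMk_right x)).aestronglyMeasurable))
    ((hH.continuous.comp (Continuous.prodMk_right t₀)).intervalIntegrable 0 1)
    ((hH'c.comp (Continuous.prodMk_right t₀)).aestronglyMeasurable)
    ?_ (intervalIntegrable_const) ?_
  · exact main.2
  · refine Filter.Eventually.of_forall fun s hs x hx => hC (x, s) ?_
    rcases Real.ball_eq_Ioo t₀ 1 ▸ hx with ⟨h1, h2⟩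
    have hs' : s ∈ Set.Ioc (0:ℝ) 1 := by
      simpa [Set.uIoc_of_le (by norm_num : (0:ℝ) ≤ 1)] using hs
    exact ⟨⟨by linarith, by linarith⟩, ⟨hs'.1.le, hs'.2⟩⟩
  · exact Filter.Eventually.of_forall fun s _ x _ => hslice x s

lemma paramContDiff (H : ℝ → ℝ → E) (hH : ContDiff ℝ (⊤:ℕ∞) (Function.uncurry H)) :
    ContDiff ℝ (⊤:ℕ∞) (fun t => ∫ s in (0:ℝ)..1, H t s) := by
  suffices h : ∀ (n : ℕ) (H : ℝ → ℝ → E), ContDiff ℝ (⊤:ℕ∞) (Function.uncurry H) →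
      ContDiff ℝ (n:ℕ∞) (fun t => ∫ s in (0:ℝ)..1, H t s) by
    rw [show ((⊤:ℕ∞) : WithTop ℕ∞) = (⊤:ℕ∞) from rfl]
    apply contDiff_infty.mpr
    intro n
    exact h n H hH
  intro n
  induction n with
  | zero =>
    intro H hH
    rw [show ((0:ℕ):ℕ∞) = 0 from rfl]
    exact contDiff_zero.mpr
      (intervalIntegral.continuous_parametric_intervalIntegral_of_continuous'
        (hH.continuous) 0 1)
  | succ n ih =>
    intro H hH
    have hder : ∀ t₀, HasDerivAt (fun t => ∫ s in (0:ℝ)..1, H t s)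
        (∫ s in (0:ℝ)..1, fderiv ℝ (Function.uncurry H) (t₀, s) (1, 0)) t₀ :=
      paramHasDerivAt H hH
    have hH' : ContDiff ℝ (⊤:ℕ∞) (Function.uncurry
        (fun t s => fderiv ℝ (Function.uncurry H) (t, s) (1, 0))) := by
      exact (hH.fderiv_right (by exact_mod_cast le_top)).clm_apply contDiff_const
    rw [show ((((n:ℕ)+1:ℕ):ℕ∞):WithTop ℕ∞) = (((n:ℕ):ℕ∞):WithTop ℕ∞) + 1 by norm_cast]
    rw [contDiff_succ_iff_deriv]
    refine ⟨fun t => (hder t).differentiableAt, by simp, ?_⟩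
    have : deriv (fun t => ∫ s in (0:ℝ)..1, H t s)
        = fun t₀ => ∫ s in (0:ℝ)..1, fderiv ℝ (Function.uncurry H) (t₀, s) (1, 0) :=
      funext fun t₀ => (hder t₀).deriv
    rw [this]
    exact ih _ hH'

lemma hadamard : ∀ (k : ℕ) (f : ℝ → E), ContDiff ℝ (⊤:ℕ∞) f →
    (∀ i, i < k → iteratedDeriv i f 0 = 0) →
    ∃ g : ℝ → E, ContDiff ℝ (⊤:ℕ∞) g ∧
      g 0 = ((k.factorial : ℝ))⁻¹ • iteratedDeriv k f 0 ∧ ∀ t, f t = t ^ k • g t := by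
  intro k
  induction k with
  | zero =>
    intro f hf _
    exact ⟨f, hf, by simp [iteratedDeriv_zero], fun t => by simp⟩
  | succ k ih =>
    intro f hf hvan
    have hf0 : f 0 = 0 := by simpa [iteratedDeriv_zero] using hvan 0 (Nat.succ_pos k)
    have hfd : Differentiable ℝ f := hf.differentiable (by simp)
    have hderiv_smooth : ∀ i : ℕ, ContDiff ℝ (⊤:ℕ∞) (iteratedDeriv (i+1) f) := by
      intro i
      have := hf.iterate_deriv (i+1)
      rwa [← iteratedDeriv_eq_iterate] at this
    -- the divided function
    set f₁ : ℝ → E := fun t => ∫ s in (0:ℝ)..1, deriv f (t * s) with hf₁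
    have hmul : ContDiff ℝ (⊤:ℕ∞) (fun p : ℝ × ℝ => p.1 * p.2) := contDiff_fst.mul contDiff_snd
    have hHi : ∀ i : ℕ, ContDiff ℝ (⊤:ℕ∞)
        (Function.uncurry (fun t s => s ^ i • iteratedDeriv (i+1) f (t * s))) := by
      intro i
      exact (contDiff_snd.pow i).smul ((hderiv_smooth i).comp hmul)
    have hf₁smooth : ContDiff ℝ (⊤:ℕ∞) f₁ := by
      apply paramContDiff
      have h := (hderiv_smooth 0).comp hmul
      have he : Function.uncurry (fun t s : ℝ => deriv f (t * s))
          = (iteratedDeriv (0+1) f) ∘ (fun p : ℝ × ℝ => p.1 * p.2) := by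
        funext p; simp [Function.uncurry, iteratedDeriv_one]
      rwa [he]
    -- iterated derivatives of f₁
    have hiter : ∀ i : ℕ, iteratedDeriv i f₁ =
        fun t => ∫ s in (0:ℝ)..1, s ^ i • iteratedDeriv (i+1) f (t * s) := by
      intro i
      induction i with
      | zero => simp [iteratedDeriv_zero, hf₁, iteratedDeriv_one]
      | succ i ihh =>
        rw [iteratedDeriv_succ, ihh]
        funext t₀
        have hH := hHi i
        have hslice_explicit : ∀ (x s : ℝ),
            HasDerivAt (fun τ => s ^ i • iteratedDeriv (i+1) f (τ * s))
              (s ^ (i+1) • iteratedDeriv (i+2) f (x * s)) x := by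
          intro x s
          have h1 : HasDerivAt (fun τ : ℝ => τ * s) s x := by
            simpa using (hasDerivAt_id x).mul_const s
          have h2 : HasDerivAt (iteratedDeriv (i+1) f) (iteratedDeriv (i+2) f (x * s)) (x * s) := by
            have := ((hderiv_smooth i).differentiable (by simp) (x*s)).hasDerivAt
            rwa [← iteratedDeriv_succ] at this
          have := (h2.scomp x h1).const_smul (s ^ i)
          simpa [smul_smul, pow_succ, mul_comm, Function.comp_def, Pi.smul_def] using this
        have hd := paramHasDerivAt _ hH t₀
        have : (fun s => fderiv ℝ (Function.uncurry (fun t s => s ^ i • iteratedDeriv (i+1) f (t * s))) (t₀, s) (1, 0))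
            = fun s => s ^ (i+1) • iteratedDeriv (i+2) f (t₀ * s) := by
          funext s
          have hFd : Differentiable ℝ (Function.uncurry (fun t s => s ^ i • iteratedDeriv (i+1) f (t * s))) :=
            hH.differentiable (by simp)
          have h1 : HasDerivAt (fun τ : ℝ => (τ, s)) ((1:ℝ), (0:ℝ)) t₀ :=
            (hasDerivAt_id t₀).prodMk (hasDerivAt_const t₀ s)
          have hA : HasDerivAt (fun τ => s ^ i • iteratedDeriv (i+1) f (τ * s))
              (fderiv ℝ (Function.uncurry (fun t s => s ^ i • iteratedDeriv (i+1) f (t * s))) (t₀, s) (1, 0)) t₀ :=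
            by have := (hFd (t₀, s)).hasFDerivAt.comp_hasDerivAt t₀ h1; exact this
          exact hA.unique (hslice_explicit t₀ s)
        rw [this] at hd
        exact hd.deriv
    -- values at 0
    have hval : ∀ i : ℕ, iteratedDeriv i f₁ 0 = ((i:ℝ)+1)⁻¹ • iteratedDeriv (i+1) f 0 := by
      intro i
      rw [hiter i]
      simp only [zero_mul]
      rw [intervalIntegral.integral_smul_const, integral_pow]
      norm_num
    -- f t = t • f₁ t
    have hfact1 : ∀ t, f t = t • f₁ t := by
      intro t
      have hderc : Continuous (deriv f) := (hderiv_smooth 0).continuous.comp (continuous_id) |>.congr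
        (fun x => by simp [iteratedDeriv_one])
      have hsub : ∫ s in (0:ℝ)..1, t • deriv f (t * s) = ∫ u in (0:ℝ)..t, deriv f u := by
        have := intervalIntegral.integral_comp_smul_deriv
          (f := fun s : ℝ => t * s) (f' := fun _ => t) (g := deriv f)
          (a := 0) (b := 1)
          (fun x _ => by simpa [mul_comm] using ((hasDerivAt_id x).const_mul t))
          continuousOn_const hderc
        simpa using this
      have hftc : ∫ u in (0:ℝ)..t, deriv f u = f t - f 0 :=
        intervalIntegral.integral_deriv_eq_sub (fun x _ => hfd x) (hderc.intervalIntegrable 0 t)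
      rw [hf₁, ← intervalIntegral.integral_smul, hsub, hftc, hf0, sub_zero]
    -- apply IH to f₁
    obtain ⟨g, hg, hg0, hgfact⟩ := ih f₁ hf₁smooth (fun i hi => by
      rw [hval i, hvan (i+1) (Nat.succ_lt_succ hi), smul_zero])
    refine ⟨g, hg, ?_, fun t => ?_⟩
    · rw [hg0, hval k, smul_smul]
      congr 1
      rw [Nat.factorial_succ]
      push_cast
      rw [mul_inv]
      ring
    · rw [hfact1 t, hgfact t, smul_smul, ← pow_succ']

lemma iterDeriv_pow (n : ℕ) : ∀ i : ℕ, iteratedDeriv i (fun x : ℝ => x ^ n)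
    = fun x => (n.descFactorial i : ℝ) * x ^ (n - i) := by
  intro i
  induction i with
  | zero => simp
  | succ i ih =>
    rw [iteratedDeriv_succ, ih]
    funext x
    rw [deriv_const_mul _ (differentiable_pow _ |>.differentiableAt)]
    rw [deriv_pow_field]
    rw [Nat.descFactorial_succ]
    push_cast
    rcases le_or_gt n i with h | h
    · have h1 : n - i = 0 := Nat.sub_eq_zero_of_le h
      have h2 : n - (i+1) = 0 := Nat.sub_eq_zero_of_le (le_trans h (Nat.le_succ i))
      simp [h1, h2]
    · have : n - i - 1 = n - (i+1) := by omega
      rw [this]; ring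

lemma iterDeriv_pow_zero (n i : ℕ) : iteratedDeriv i (fun x : ℝ => x ^ n) 0
    = if i = n then (n.factorial : ℝ) else 0 := by
  rw [iterDeriv_pow]
  rcases eq_or_ne i n with rfl | h
  · simp [Nat.descFactorial_self]
  · simp only [if_neg h]
    rcases lt_or_gt_of_ne h with h' | h'
    · rw [zero_pow (by omega), mul_zero]
    · rw [Nat.descFactorial_eq_zero_iff_lt.mpr h']
      simp

lemma mult_main (g : ℝ → ℝ) (hg : ContDiff ℝ (⊤:ℕ∞) g)
    (T : ℝ → ℝ × ℝ) (hTc : ContDiff ℝ (⊤:ℕ∞) T) (hT0 : T 0 = (1, 0))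
    (k : ℕ) (hk : 1 ≤ k)
    (hvan : ∀ i, i < k - 1 → iteratedDeriv i g 0 = 0)
    (hne : iteratedDeriv (k-1) g 0 ≠ 0)
    (φ : ℝ → ℝ × ℝ) (hφ : ∀ t, φ t - φ 0 = ∫ u in (0:ℝ)..t, g u • T u) :
    HasMultiplicity φ k := by
  obtain ⟨h, hh, hh0, hfac⟩ := hadamard (k-1) g hg hvan
  have hh0ne : h 0 ≠ 0 := by
    rw [hh0]
    simp only [ne_eq, smul_eq_mul, mul_eq_zero, inv_eq_zero, Nat.cast_eq_zero]
    push_neg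
    exact ⟨Nat.factorial_ne_zero _, hne⟩
  set W : ℝ → ℝ × ℝ := fun u => h u • T u with hW
  have hWc : ContDiff ℝ (⊤:ℕ∞) W := hh.smul hTc
  set ψ : ℝ → ℝ × ℝ := fun t => (k.factorial : ℝ) • ∫ s in (0:ℝ)..1, s ^ (k-1) • W (t * s) with hψ
  refine ⟨ψ, ?_, ?_, ?_⟩
  · apply ContDiff.const_smul
    apply paramContDiff
    exact (contDiff_snd.pow (k-1)).smul (hWc.comp (contDiff_fst.mul contDiff_snd))
  · rw [hψ]
    simp only [zero_mul]
    rw [intervalIntegral.integral_smul_const, integral_pow]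
    intro hcon
    rw [smul_smul] at hcon
    rcases smul_eq_zero.mp hcon with h1 | h1
    · rcases mul_eq_zero.mp h1 with h2 | h2
      · exact Nat.cast_ne_zero.mpr (Nat.factorial_ne_zero k) h2
      · rw [div_eq_zero_iff] at h2
        rcases h2 with h3 | h3
        · rw [one_pow, zero_pow (by omega : k - 1 + 1 ≠ 0), sub_zero] at h3
          norm_num at h3
        · have hpos : (0:ℝ) < ((k-1:ℕ):ℝ) + 1 := by positivity
          rw [h3] at hpos
          exact lt_irrefl 0 hpos
    · rw [hW] at h1
      simp only [hT0, Prod.smul_mk, smul_eq_mul, mul_one, mul_zero, Prod.mk_eq_zero] at h1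
      exact hh0ne h1.1
  · intro t
    rw [hφ t, hψ]
    have hint : ∀ u : ℝ, g u • T u = u ^ (k-1) • W u := by
      intro u
      rw [hW, hfac u, smul_eq_mul, mul_smul]
    simp_rw [hint]
    have hWcont : Continuous (fun u => u ^ (k-1) • W u) :=
      (continuous_pow _).smul hWc.continuous
    have hsub : ∫ s in (0:ℝ)..1, t • ((t*s) ^ (k-1) • W (t * s)) = ∫ u in (0:ℝ)..t, u ^ (k-1) • W u := by
      have := intervalIntegral.integral_comp_smul_deriv
        (f := fun s : ℝ => t * s) (f' := fun _ => t) (g := fun u => u ^ (k-1) • W u)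
        (a := 0) (b := 1)
        (fun x _ => by simpa [mul_comm] using (hasDerivAt_id x).const_mul t)
        continuousOn_const hWcont
      simpa using this
    rw [smul_smul, div_mul_cancel₀ _ (Nat.cast_ne_zero.mpr (Nat.factorial_ne_zero k) : ((k.factorial:ℝ)) ≠ 0)]
    rw [← hsub, ← intervalIntegral.integral_smul]
    apply intervalIntegral.integral_congr
    intro s _
    simp only []
    rw [smul_smul, smul_smul]
    have hsc : t * (t*s) ^ (k-1) = t ^ k * s ^ (k-1) := by
      rw [mul_pow, show t ^ k = t * t ^ (k-1) by rw [← pow_succ']; congr 1; omega]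
      ring
    rw [hsc]
    simp only [hW, smul_smul, mul_assoc]

end Aux

/-- the multiplicity `m^δ` at `0` of the parallel curve
`φ_m^δ = φ_m + δ • n` equals `ord θ` if `ord θ < m`; equals `m` if `ord θ > m`, or if
`ord θ = m` and `δ ≠ 1/θ_m`; and equals `min{i > m : θ_i ≠ 0}` if `ord θ = m` and
`δ = 1/θ_m`.  Here `θ_i = iteratedDeriv i θ 0` and `n = ord θ` is the least index with
`θ_n ≠ 0`. -/
theorem stmt_8 (m : ℕ) (hm : 1 ≤ m) (δ : ℝ) (hδ : δ ≠ 0)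
    (θ : ℝ → ℝ) (hθ : ContDiff ℝ (⊤ : ℕ∞) θ) (hθ0 : θ 0 = 0)
    (T N φm φδ : ℝ → ℝ × ℝ)
    (hT : ∀ u, T u = (Real.cos (θ u), Real.sin (θ u)))
    (hN : ∀ u, N u = (-Real.sin (θ u), Real.cos (θ u)))
    (hφm : ∀ t : ℝ, φm t = ∫ u in (0 : ℝ)..t, (u ^ (m - 1) / ((m - 1).factorial : ℝ)) • T u)
    (hφδ : ∀ t : ℝ, φδ t = φm t + δ • N t)
    (nord : ℕ) (hord1 : 1 ≤ nord)
    (hordne : iteratedDeriv nord θ 0 ≠ 0)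
    (hordmin : ∀ i, i < nord → iteratedDeriv i θ 0 = 0) :
    (nord < m → HasMultiplicity φδ nord) ∧
    ((m < nord ∨ (nord = m ∧ δ ≠ (iteratedDeriv m θ 0)⁻¹)) → HasMultiplicity φδ m) ∧
    (∀ j : ℕ, nord = m → δ = (iteratedDeriv m θ 0)⁻¹ →
      m < j → iteratedDeriv j θ 0 ≠ 0 →
      (∀ i, m < i → i < j → iteratedDeriv i θ 0 = 0) →
      HasMultiplicity φδ j) := by
  have hTfun : T = fun u => (Real.cos (θ u), Real.sin (θ u)) := funext hT
  have hNfun : N = fun u => (-Real.sin (θ u), Real.cos (θ u)) := funext hN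
  subst hTfun hNfun
  have hθd : Differentiable ℝ θ := hθ.differentiable (by simp)
  have hθ' : ContDiff ℝ (⊤:ℕ∞) (deriv θ) := (contDiff_infty_iff_deriv.mp hθ).2
  have hTc : ContDiff ℝ (⊤:ℕ∞) (fun u => (Real.cos (θ u), Real.sin (θ u))) :=
    (Real.contDiff_cos.comp hθ).prodMk (Real.contDiff_sin.comp hθ)
  have hT0 : (fun u => (Real.cos (θ u), Real.sin (θ u))) 0 = ((1:ℝ), (0:ℝ)) := by
    simp [hθ0]
  set g : ℝ → ℝ := fun u => (((m-1).factorial : ℝ))⁻¹ * u ^ (m-1) - δ * deriv θ u with hg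
  have hgsmooth : ContDiff ℝ (⊤:ℕ∞) g :=
    (contDiff_const.mul (contDiff_id.pow _)).sub (contDiff_const.mul hθ')
  -- the derivative of δ • N
  have hNder : ∀ u, HasDerivAt (fun v => δ • (-Real.sin (θ v), Real.cos (θ v)))
      ((-(δ * deriv θ u)) • (Real.cos (θ u), Real.sin (θ u))) u := by
    intro u
    have h1 : HasDerivAt (fun v => Real.sin (θ v)) (Real.cos (θ u) * deriv θ u) u :=
      ((hθd u).hasDerivAt).sin
    have h2 : HasDerivAt (fun v => Real.cos (θ v)) (-Real.sin (θ u) * deriv θ u) u :=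
      ((hθd u).hasDerivAt).cos
    have h3 : HasDerivAt (fun v => (-Real.sin (θ v), Real.cos (θ v)))
        ((-(Real.cos (θ u) * deriv θ u), -Real.sin (θ u) * deriv θ u)) u := (h1.neg).prodMk h2
    have h4 := h3.const_smul δ
    have heq : δ • ((-(Real.cos (θ u) * deriv θ u), -Real.sin (θ u) * deriv θ u))
        = (-(δ * deriv θ u)) • ((Real.cos (θ u), Real.sin (θ u))) := by
      simp only [Prod.smul_mk, smul_eq_mul, Prod.mk.injEq]
      constructor <;> ring
    rw [heq] at h4
    exact h4
  have hintc1 : Continuous (fun u : ℝ => (u ^ (m-1) / (((m-1).factorial : ℝ))) • (Real.cos (θ u), Real.sin (θ u))) :=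
    ((continuous_pow _).div_const _).smul hTc.continuous
  have hintc2 : Continuous (fun u : ℝ => (-(δ * deriv θ u)) • (Real.cos (θ u), Real.sin (θ u))) :=
    ((continuous_const.mul hθ'.continuous).neg).smul hTc.continuous
  -- the key integral identity
  have hkey : ∀ t : ℝ, φδ t - φδ 0 = ∫ u in (0:ℝ)..t, g u • (Real.cos (θ u), Real.sin (θ u)) := by
    intro t
    have hδN : ∫ u in (0:ℝ)..t, (-(δ * deriv θ u)) • (Real.cos (θ u), Real.sin (θ u))
        = δ • (-Real.sin (θ t), Real.cos (θ t)) - δ • (-Real.sin (θ 0), Real.cos (θ 0)) := by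
      apply intervalIntegral.integral_deriv_eq_sub'
        (f := fun v => δ • (-Real.sin (θ v), Real.cos (θ v)))
      · exact funext fun u => (hNder u).deriv
      · exact fun x _ => (hNder x).differentiableAt
      · exact hintc2.continuousOn
    have hφm0 : φm 0 = 0 := by rw [hφm 0, intervalIntegral.integral_same]
    rw [hφδ t, hφδ 0, hφm t, hφm0]
    have hsplit : ∫ u in (0:ℝ)..t, g u • (Real.cos (θ u), Real.sin (θ u))
        = (∫ u in (0:ℝ)..t, (u ^ (m-1) / (((m-1).factorial : ℝ))) • (Real.cos (θ u), Real.sin (θ u)))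
          + ∫ u in (0:ℝ)..t, (-(δ * deriv θ u)) • (Real.cos (θ u), Real.sin (θ u)) := by
      rw [← intervalIntegral.integral_add (hintc1.intervalIntegrable 0 t) (hintc2.intervalIntegrable 0 t)]
      congr 1
      funext u
      rw [hg]
      simp only [div_eq_inv_mul]
      module
    rw [hsplit, hδN]
    abel
  -- iterated derivatives of g at 0
  have hB : ∀ i : ℕ, iteratedDeriv i g 0
      = (if i = m - 1 then (1:ℝ) else 0) - δ * iteratedDeriv (i+1) θ 0 := by
    intro i
    have e1 : iteratedDeriv i (fun u : ℝ => (((m-1).factorial : ℝ))⁻¹ * u ^ (m-1)) 0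
        = (if i = m - 1 then (1:ℝ) else 0) := by
      rw [← iteratedDerivWithin_univ,
        iteratedDerivWithin_const_mul (f := fun u : ℝ => u ^ (m-1)) (Set.mem_univ (0:ℝ))
          uniqueDiffOn_univ _ ((contDiff_id.pow _).contDiffWithinAt),
        iteratedDerivWithin_univ, iterDeriv_pow_zero]
      split
      · rw [mul_comm, mul_inv_cancel₀ (Nat.cast_ne_zero.mpr (Nat.factorial_ne_zero _))]
      · rw [mul_zero]
    have e2 : iteratedDeriv i (fun u : ℝ => δ * deriv θ u) 0
        = δ * iteratedDeriv (i+1) θ 0 := by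
      rw [← iteratedDerivWithin_univ,
        iteratedDerivWithin_const_mul (Set.mem_univ (0:ℝ)) uniqueDiffOn_univ _
          (ContDiff.contDiffWithinAt (n := (i:ℕ)) (hθ'.of_le (by exact_mod_cast le_top))),
        iteratedDerivWithin_univ, iteratedDeriv_succ']
    have hsub : iteratedDeriv i g 0
        = iteratedDeriv i (fun u : ℝ => (((m-1).factorial : ℝ))⁻¹ * u ^ (m-1)) 0
          - iteratedDeriv i (fun u : ℝ => δ * deriv θ u) 0 := by
      rw [← iteratedDerivWithin_univ, ← iteratedDerivWithin_univ, ← iteratedDerivWithin_univ]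
      rw [hg]
      exact iteratedDerivWithin_sub (Set.mem_univ 0) uniqueDiffOn_univ
        (contDiff_const.mul (contDiff_id.pow _)).contDiffWithinAt
        (ContDiff.contDiffWithinAt (n := (i:ℕ)) ((contDiff_const.mul hθ').of_le (by exact_mod_cast le_top)))
    rw [hsub, e1, e2]
  refine ⟨?_, ?_, ?_⟩
  · -- case nord < m
    intro hlt
    apply mult_main g hgsmooth _ hTc hT0 nord hord1 _ _ φδ hkey
    · intro i hi
      rw [hB i]
      rw [if_neg (by omega), hordmin (i+1) (by omega)]
      ring
    · rw [hB]
      rw [if_neg (by omega), show nord - 1 + 1 = nord by omega]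
      simp only [zero_sub, ne_eq, neg_eq_zero, mul_eq_zero]
      push_neg
      exact ⟨hδ, hordne⟩
  · -- case m < nord or (nord = m and δ ≠ θ_m⁻¹)
    intro hcase
    apply mult_main g hgsmooth _ hTc hT0 m hm _ _ φδ hkey
    · intro i hi
      rw [hB i, if_neg (by omega)]
      have : iteratedDeriv (i+1) θ 0 = 0 := by
        apply hordmin
        rcases hcase with h | ⟨h, _⟩ <;> omega
      rw [this]; ring
    · rw [hB, if_pos rfl, show m - 1 + 1 = m by omega]
      rcases hcase with h | ⟨h, hne⟩
      · rw [hordmin m h]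
        norm_num
      · subst h
        intro hcon
        have h1 : δ * iteratedDeriv nord θ 0 = 1 := by linarith [hcon]
        exact hne (eq_inv_of_mul_eq_one_left (by linarith [h1] : δ * iteratedDeriv nord θ 0 = 1) ▸ rfl)
  · -- case nord = m, δ = θ_m⁻¹
    intro j hnm hδeq hmj hjne hjmin
    subst hnm
    have hθm : iteratedDeriv nord θ 0 ≠ 0 := hordne
    apply mult_main g hgsmooth _ hTc hT0 j (by omega) _ _ φδ hkey
    · intro i hi
      rw [hB i]
      rcases lt_trichotomy (i+1) nord with h | h | h
      · rw [if_neg (by omega), hordmin (i+1) h]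
        ring
      · rw [if_pos (by omega), show i + 1 = nord from h, hδeq]
        rw [inv_mul_cancel₀ hθm]
        ring
      · rw [if_neg (by omega), hjmin (i+1) h (by omega)]
        ring
    · rw [hB, if_neg (by omega), show j - 1 + 1 = j by omega]
      simp only [zero_sub, ne_eq, neg_eq_zero, mul_eq_zero]
      push_neg
      exact ⟨hδ, hjne⟩
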